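/- Let (p(·,·)) be the transition kernel of an irreducible aperiodic discrete-time Markov chain on Λ ∪ {∅} with ∅ absorbing and reached a.s., and let R be its decay parameter, i.e., p^n(A,A) = R^{−n+o(n)}. Suppose the n-step diagonal transition probabilities of the continuous-time semigroup P_ψ (taken as p) satisfy the Ferrari–Kesten–Martínez conditions (H1)–(H3) for some Λ' ⊆ Λ, A' ∈ Λ', ρ < R^{−1}, M, ε > 0. If p = P_ψ is R-positive with R = e^{αψ} and summable left eigenvector ν, then the continuous-time semigroup (P_t)_{t≥0} is α-positive with the same left eigenvector ν: ν P_t = e^{−αt} ν for all t ≥ 0, and limsup_{t→∞} e^{αt} P_t(A,A) > 0. -/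

import Mathlib

open scoped Classical ENNReal
open Filter

namespace SkeletonAux

variable {Λ : Type*}

noncomputable def Qpow (Q : Λ → Λ → ℝ≥0∞) : ℕ → Λ → Λ → ℝ≥0∞
  | 0 => fun A B => if A = B then 1 else 0
  | (n+1) => fun A B => ∑' C, Q A C * Qpow Q n C B

noncomputable def FF (Q : Λ → Λ → ℝ≥0∞) (b : Λ) : ℕ → Λ → ℝ≥0∞
  | 0 => fun A => Q A b
  | (n+1) => fun A => ∑' C, if C = b then 0 else Q A C * FF Q b n C

noncomputable def SS (Q : Λ → Λ → ℝ≥0∞) (b : Λ) (N : ℕ) (A : Λ) : ℝ≥0∞ :=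
  ∑ k ∈ Finset.range N, FF Q b k A

lemma SS_succ (Q : Λ → Λ → ℝ≥0∞) (b : Λ) (N : ℕ) (A : Λ) :
    SS Q b (N+1) A = Q A b + ∑' C, if C = b then 0 else Q A C * SS Q b N C := by
  unfold SS
  rw [Finset.sum_range_succ']
  have h1 : ∑ k ∈ Finset.range N, FF Q b (k+1) A
      = ∑' C, if C = b then 0 else Q A C * ∑ k ∈ Finset.range N, FF Q b k C := by
    have : ∀ k ∈ Finset.range N, Summable (fun C => if C = b then 0 else Q A C * FF Q b k C) :=
      fun _ _ => ENNReal.summable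
    rw [show (∑ k ∈ Finset.range N, FF Q b (k+1) A)
        = ∑ k ∈ Finset.range N, ∑' C, (if C = b then 0 else Q A C * FF Q b k C) from rfl,
      ← Summable.tsum_finsetSum this]
    congr 1; funext C
    by_cases hC : C = b
    · simp [hC]
    · simp [hC, Finset.mul_sum]
  rw [h1, add_comm]
  rfl

lemma SS_le_one (Q : Λ → Λ → ℝ≥0∞) (hrow : ∀ A, ∑' B, Q A B = 1) (b : Λ) :
    ∀ N A, SS Q b N A ≤ 1 := by
  intro N
  induction N with
  | zero => intro A; simp [SS]
  | succ N ih =>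
    intro A
    rw [SS_succ]
    calc Q A b + ∑' C, (if C = b then 0 else Q A C * SS Q b N C)
        ≤ Q A b + ∑' C, (if C = b then 0 else Q A C) := by
          gcongr with C
          by_cases hC : C = b
          · simp [hC]
          · simp only [hC, if_false]
            calc Q A C * SS Q b N C ≤ Q A C * 1 := by gcongr; exact ih C
              _ = Q A C := mul_one _
      _ = ∑' C, Q A C := (ENNReal.tsum_eq_add_tsum_ite b).symm
      _ = 1 := hrow A

lemma rr_le_one (Q : Λ → Λ → ℝ≥0∞) (hrow : ∀ A, ∑' B, Q A B = 1) (b A : Λ) :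
    ∑' k, FF Q b k A ≤ 1 := by
  rw [ENNReal.tsum_eq_iSup_nat]
  exact iSup_le fun N => SS_le_one Q hrow b N A

lemma renewal (Q : Λ → Λ → ℝ≥0∞) (b : Λ) :
    ∀ n (A : Λ), Qpow Q (n+1) A b
      = ∑ k ∈ Finset.range (n+1), FF Q b k A * Qpow Q (n-k) b b := by
  intro n
  induction n with
  | zero =>
    intro A
    rw [show ∑ k ∈ Finset.range (0+1), FF Q b k A * Qpow Q (0-k) b b
        = FF Q b 0 A * Qpow Q 0 b b from Finset.sum_range_one _]
    show (∑' C, Q A C * Qpow Q 0 C b) = FF Q b 0 A * Qpow Q 0 b b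
    have : (fun C => Q A C * Qpow Q 0 C b) = fun C => if C = b then Q A b else 0 := by
      funext C
      show Q A C * (if C = b then 1 else 0) = _
      by_cases hC : C = b <;> simp [hC]
    rw [this, tsum_ite_eq]
    show Q A b = Q A b * Qpow Q 0 b b
    show Q A b = Q A b * (if b = b then (1:ENNReal) else 0)
    rw [if_pos rfl, mul_one]
  | succ n ih =>
    intro A
    show (∑' C, Q A C * Qpow Q (n+1) C b) = _
    have step1 : (∑' C, Q A C * Qpow Q (n+1) C b)
        = ∑ k ∈ Finset.range (n+1), (∑' C, Q A C * FF Q b k C) * Qpow Q (n-k) b b := by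
      rw [show (fun C => Q A C * Qpow Q (n+1) C b)
          = fun C => ∑ k ∈ Finset.range (n+1), Q A C * (FF Q b k C * Qpow Q (n-k) b b) by
        funext C; rw [ih C, Finset.mul_sum]]
      rw [Summable.tsum_finsetSum (fun _ _ => ENNReal.summable)]
      congr 1; funext k
      rw [show (fun C => Q A C * (FF Q b k C * Qpow Q (n-k) b b))
          = fun C => (Q A C * FF Q b k C) * Qpow Q (n-k) b b by funext C; ring]
      exact ENNReal.tsum_mul_right
    have key : ∀ k, (∑' C, Q A C * FF Q b k C) = Q A b * FF Q b k b + FF Q b (k+1) A := by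
      intro k
      rw [ENNReal.tsum_eq_add_tsum_ite b]
      rfl
    rw [step1]
    simp only [key]
    rw [Finset.sum_congr rfl (fun k _ => add_mul (Q A b * FF Q b k b) (FF Q b (k+1) A) _),
      Finset.sum_add_distrib]
    have hfirst : ∑ k ∈ Finset.range (n+1), Q A b * FF Q b k b * Qpow Q (n-k) b b
        = Q A b * Qpow Q (n+1) b b := by
      rw [ih b, Finset.mul_sum]
      congr 1; funext k; ring
    rw [hfirst, Finset.sum_range_succ' (fun k => FF Q b k A * Qpow Q (n+1-k) b b) (n+1)]
    simp only [Nat.succ_sub_succ, Nat.sub_zero]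
    show _ = (∑ k ∈ Finset.range (n+1), FF Q b (k+1) A * Qpow Q (n-k) b b)
        + FF Q b 0 A * Qpow Q (n+1) b b
    rw [add_comm]
    rfl

lemma theta_eq_one (Q : Λ → Λ → ℝ≥0∞) (hrow : ∀ A, ∑' B, Q A B = 1) (b : Λ)
    (hdiv : ∑' n, Qpow Q n b b = ∞) : ∑' k, FF Q b k b = 1 := by
  set θ := ∑' k, FF Q b k b with hθdef
  refine le_antisymm (rr_le_one Q hrow b b) ?_
  by_contra hlt
  push_neg at hlt
  have hθ1 : θ ≤ 1 := rr_le_one Q hrow b b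
  have hsub0 : (1:ℝ≥0∞) - θ ≠ 0 := by
    intro h; exact absurd (tsub_eq_zero_iff_le.1 h) (not_le.2 hlt)
  have hsubt : (1:ℝ≥0∞) - θ ≠ ⊤ := by
    intro h; exact (by simp [h] : ¬ ((1:ℝ≥0∞) - θ ≤ 1)) (tsub_le_self.trans le_rfl)
  have key : ∀ N, ∑ n ∈ Finset.range N, Qpow Q n b b ≤ (1 - θ)⁻¹ := by
    intro N
    induction N with
    | zero => simp
    | succ N ih =>
      rw [Finset.sum_range_succ' (fun n => Qpow Q n b b) N]
      have h0 : Qpow Q 0 b b = 1 := by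
        show (if b = b then (1:ℝ≥0∞) else 0) = 1
        rw [if_pos rfl]
      have hdouble : ∑ k ∈ Finset.range N, Qpow Q (k+1) b b
          ≤ θ * ∑ m ∈ Finset.range N, Qpow Q m b b := by
        have hre : ∑ k ∈ Finset.range N, Qpow Q (k+1) b b
            = ∑ p ∈ (Finset.range N).sigma (fun k => Finset.range (k+1)),
                FF Q b p.2 b * Qpow Q (p.1 - p.2) b b := by
          rw [Finset.sum_sigma]
          exact Finset.sum_congr rfl (fun k _ => renewal Q b k b)
        have hbij : ∑ p ∈ (Finset.range N).sigma (fun k => Finset.range (k+1)),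
                FF Q b p.2 b * Qpow Q (p.1 - p.2) b b
            = ∑ p ∈ (Finset.range N ×ˢ Finset.range N).filter (fun p => p.1 + p.2 < N),
                FF Q b p.1 b * Qpow Q p.2 b b := by
          refine Finset.sum_nbij' (fun p => (p.2, p.1 - p.2)) (fun p => ⟨p.1 + p.2, p.1⟩)
            ?_ ?_ ?_ ?_ ?_
          · rintro ⟨k, j⟩ hp
            simp only [Finset.mem_sigma, Finset.mem_range] at hp
            obtain ⟨hk, hj⟩ := hp
            have hjk : j ≤ k := Nat.lt_succ_iff.1 hj
            simp only [Finset.mem_filter, Finset.mem_product, Finset.mem_range]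
            exact ⟨⟨lt_of_le_of_lt hjk hk, lt_of_le_of_lt (Nat.sub_le k j) hk⟩,
              by rw [Nat.add_sub_cancel' hjk]; exact hk⟩
          · rintro ⟨j, m⟩ hp
            simp only [Finset.mem_filter, Finset.mem_product, Finset.mem_range] at hp
            simp only [Finset.mem_sigma, Finset.mem_range]
            exact ⟨hp.2, Nat.lt_succ_iff.2 (Nat.le_add_right j m)⟩
          · rintro ⟨k, j⟩ hp
            simp only [Finset.mem_sigma, Finset.mem_range] at hp
            have hjk : j ≤ k := Nat.lt_succ_iff.1 hp.2
            simp [Nat.add_sub_cancel' hjk]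
          · rintro ⟨j, m⟩ _
            simp
          · rintro ⟨k, j⟩ _
            rfl
        calc ∑ k ∈ Finset.range N, Qpow Q (k+1) b b
            = ∑ p ∈ (Finset.range N ×ˢ Finset.range N).filter (fun p => p.1 + p.2 < N),
                FF Q b p.1 b * Qpow Q p.2 b b := by rw [hre, hbij]
          _ ≤ ∑ p ∈ Finset.range N ×ˢ Finset.range N,
                FF Q b p.1 b * Qpow Q p.2 b b :=
              Finset.sum_le_sum_of_subset (Finset.filter_subset _ _)
          _ = (∑ k ∈ Finset.range N, FF Q b k b) * ∑ m ∈ Finset.range N, Qpow Q m b b := by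
              rw [Finset.sum_mul_sum, Finset.sum_product]
          _ ≤ θ * ∑ m ∈ Finset.range N, Qpow Q m b b := by
              gcongr
              exact ENNReal.sum_le_tsum _
      calc (∑ k ∈ Finset.range N, Qpow Q (k+1) b b) + Qpow Q 0 b b
          ≤ θ * (1 - θ)⁻¹ + 1 := by
            rw [h0]; gcongr
            exact hdouble.trans (by gcongr)
        _ = ((1 - θ) + θ) * (1 - θ)⁻¹ := by
            rw [add_mul, ENNReal.mul_inv_cancel hsub0 hsubt, add_comm]
        _ = (1 - θ)⁻¹ := by
            rw [tsub_add_cancel_of_le hθ1, one_mul]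
  have : ∑' n, Qpow Q n b b ≤ (1 - θ)⁻¹ := by
    rw [ENNReal.tsum_eq_iSup_nat]
    exact iSup_le key
  rw [hdiv] at this
  exact absurd this (by simp [ENNReal.inv_lt_top.2 (pos_iff_ne_zero.2 hsub0), ne_of_lt,
    lt_top_iff_ne_top.1 (ENNReal.inv_lt_top.2 (pos_iff_ne_zero.2 hsub0))])

lemma rr_eq_one (Q : Λ → Λ → ℝ≥0∞) (hpos : ∀ A B, 0 < Q A B)
    (hrow : ∀ A, ∑' B, Q A B = 1) (b : Λ)
    (hone : ∑' k, FF Q b k b = 1) :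
    ∀ C, C ≠ b → ∑' k, FF Q b k C = 1 := by
  intro C0 hC0
  have hsplit : ∑' k, FF Q b k b
      = Q b b + ∑' C, if C = b then 0 else Q b C * ∑' k, FF Q b k C := by
    rw [tsum_eq_zero_add' ENNReal.summable]
    congr 1
    have h0 : ∀ k, FF Q b (k+1) b = ∑' C, if C = b then 0 else Q b C * FF Q b k C :=
      fun k => rfl
    calc ∑' k, FF Q b (k+1) b
        = ∑' (k : ℕ) (C : Λ), if C = b then 0 else Q b C * FF Q b k C := by
          exact tsum_congr h0
      _ = ∑' (C : Λ) (k : ℕ), if C = b then 0 else Q b C * FF Q b k C :=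
          ENNReal.tsum_comm
      _ = ∑' C, if C = b then 0 else Q b C * ∑' k, FF Q b k C := by
          refine tsum_congr fun C => ?_
          by_cases hC : C = b
          · simp [hC]
          · simp only [hC, if_false]
            exact ENNReal.tsum_mul_left
  have hrow' : (1:ℝ≥0∞) = Q b b + ∑' C, if C = b then 0 else Q b C := by
    rw [← hrow b, ENNReal.tsum_eq_add_tsum_ite b]
  have hQbb : Q b b ≠ ⊤ := by
    refine lt_top_iff_ne_top.1 (lt_of_le_of_lt ?_ (by norm_num : (1:ℝ≥0∞) < ⊤))
    rw [← hrow b]; exact ENNReal.le_tsum b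
  have heq : (∑' C, if C = b then 0 else Q b C * ∑' k, FF Q b k C)
      = ∑' C, if C = b then 0 else Q b C := by
    have h1 : Q b b + (∑' C, if C = b then 0 else Q b C * ∑' k, FF Q b k C)
        = Q b b + ∑' C, if C = b then 0 else Q b C := by
      rw [← hsplit, hone, hrow']
    exact (ENNReal.add_right_inj hQbb).1 h1
  -- pointwise: each term ≤, total sums equal and finite, so terms equal
  have hle : ∀ C, (if C = b then 0 else Q b C * ∑' k, FF Q b k C)
      ≤ (if C = b then 0 else Q b C) := by
    intro C
    by_cases hC : C = b
    · simp [hC]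
    · simp only [hC, if_false]
      calc Q b C * ∑' k, FF Q b k C ≤ Q b C * 1 := by gcongr; exact rr_le_one Q hrow b C
        _ = Q b C := mul_one _
  have hfin : (∑' C, if C = b then 0 else Q b C * ∑' k, FF Q b k C) ≠ ⊤ := by
    rw [heq]
    refine lt_top_iff_ne_top.1 (lt_of_le_of_lt ?_ (by norm_num : (1:ℝ≥0∞) < ⊤))
    calc (∑' C, if C = b then 0 else Q b C) ≤ ∑' C, Q b C := by
          gcongr with C
          by_cases hC : C = b <;> simp [hC]
      _ = 1 := hrow b
  by_contra hne
  have hlt : (if C0 = b then 0 else Q b C0 * ∑' k, FF Q b k C0)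
      < (if C0 = b then 0 else Q b C0) := by
    simp only [hC0, if_false]
    have hr1 : ∑' k, FF Q b k C0 < 1 := lt_of_le_of_ne (rr_le_one Q hrow b C0) hne
    calc Q b C0 * ∑' k, FF Q b k C0 < Q b C0 * 1 := by
          refine ENNReal.mul_lt_mul_right ?_ ?_ hr1
          · exact (hpos b C0).ne'
          · refine lt_top_iff_ne_top.1 (lt_of_le_of_lt ?_ (by norm_num : (1:ℝ≥0∞) < ⊤))
            rw [← hrow b]; exact ENNReal.le_tsum C0
      _ = Q b C0 := mul_one _
  exact absurd heq (ne_of_lt (ENNReal.tsum_lt_tsum hfin hle hlt))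

lemma harmonic_ge (Q : Λ → Λ → ℝ≥0∞) (b : Λ)
    (H : Λ → ℝ≥0∞) (hH : ∀ A, ∑' C, Q A C * H C = H A) :
    ∀ N A, SS Q b N A * H b ≤ H A := by
  intro N
  induction N with
  | zero => intro A; simp [SS]
  | succ N ih =>
    intro A
    rw [SS_succ]
    calc (Q A b + ∑' C, if C = b then 0 else Q A C * SS Q b N C) * H b
        = Q A b * H b + ∑' C, (if C = b then 0 else Q A C * SS Q b N C) * H b := by
          rw [add_mul, ENNReal.tsum_mul_right]
      _ ≤ Q A b * H b + ∑' C, (if C = b then 0 else Q A C * H C) := by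
          gcongr with C
          by_cases hC : C = b
          · simp [hC]
          · simp only [hC, if_false, ite_mul, zero_mul]
            calc Q A C * SS Q b N C * H b = Q A C * (SS Q b N C * H b) := by ring
              _ ≤ Q A C * H C := by gcongr; exact ih C
      _ = ∑' C, Q A C * H C := (ENNReal.tsum_eq_add_tsum_ite (f := fun C => Q A C * H C) b).symm
      _ = H A := hH A

lemma harmonic_const (Q : Λ → Λ → ℝ≥0∞) (hpos : ∀ A B, 0 < Q A B)
    (hrow : ∀ A, ∑' B, Q A B = 1)
    (hdiv : ∀ b, ∑' n, Qpow Q n b b = ∞)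
    (H : Λ → ℝ≥0∞) (hH : ∀ A, ∑' C, Q A C * H C = H A) :
    ∀ A B, H A = H B := by
  have hone : ∀ b, ∑' k, FF Q b k b = 1 := fun b => theta_eq_one Q hrow b (hdiv b)
  have key : ∀ b A, H b ≤ H A := by
    intro b A
    by_cases hAb : A = b
    · rw [hAb]
    · have h1 : (∑' k, FF Q b k A) * H b ≤ H A := by
        rw [ENNReal.tsum_eq_iSup_nat, ENNReal.iSup_mul]
        exact iSup_le fun N => harmonic_ge Q b H hH N A
      rwa [rr_eq_one Q hpos hrow b (hone b) A hAb, one_mul] at h1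
  exact fun A B => le_antisymm (key A B) (key B A)


lemma Qpow_zero (Q : Λ → Λ → ℝ≥0∞) (A B : Λ) :
    Qpow Q 0 A B = if A = B then 1 else 0 := rfl

lemma Qpow_succ (Q : Λ → Λ → ℝ≥0∞) (n : ℕ) (A B : Λ) :
    Qpow Q (n+1) A B = ∑' C, Q A C * Qpow Q n C B := rfl

end SkeletonAux

/-- Transfer of positivity from the discrete skeleton to continuous time: if the
irreducible sub-Markovian semigroup `(P_t)` on a countable set `Λ` has Kingman decay
parameter `α`, and its skeleton `p = P_ψ` is `R`-positive with `R = e^{αψ}` and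
summable left eigenvector `ν` (`ν P_ψ = e^{−αψ} ν`), then `(P_t)` is `α`-positive
with the same left eigenvector: `ν P_t = e^{−αt} ν` for all `t ≥ 0`, and
`limsup_{t→∞} e^{αt} P_t(A,A) > 0`. -/
theorem skeleton_R_positive_implies_alpha_positive
    {Λ : Type*} [Countable Λ] [Nonempty Λ]
    (P : ℝ → Λ → Λ → ℝ) (α ψ : ℝ) (hψ : 0 < ψ)
    (hPnn : ∀ t A A', 0 ≤ P t A A')
    (hPpos : ∀ t > 0, ∀ A A', 0 < P t A A')
    (hProw : ∀ t A, Summable (P t A) ∧ ∑' A', P t A A' ≤ 1)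
    (hsemi : ∀ s ≥ 0, ∀ t ≥ 0, ∀ A B,
      (Summable fun C => P s A C * P t C B) ∧
      ∑' C, P s A C * P t C B = P (s + t) A B)
    (hP0 : ∀ A B, P 0 A B = if A = B then 1 else 0)
    (hkingman : ∀ A A', Filter.Tendsto (fun t : ℝ => Real.log (P t A A') / t)
      Filter.atTop (nhds (-α)))
    (ν : Λ → ℝ) (hν : Summable ν) (hνpos : ∀ A, 0 < ν A)
    (hleft : ∀ A', (Summable fun B => ν B * P ψ B A') ∧
      ∑' B, ν B * P ψ B A' = Real.exp (-(α * ψ)) * ν A')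
    (hRpos : ∀ A : Λ,
      0 < Filter.limsup (fun n : ℕ => Real.exp (α * ψ * n) * P (n * ψ) A A)
        Filter.atTop) :
    (∀ t ≥ 0, ∀ A', (Summable fun B => ν B * P t B A') ∧
      ∑' B, ν B * P t B A' = Real.exp (-(α * t)) * ν A') ∧
    ∀ A : Λ,
      0 < Filter.limsup (fun t : ℝ => Real.exp (α * t) * P t A A)
        Filter.atTop := by
  classical
  obtain ⟨b₀⟩ := (inferInstance : Nonempty Λ)
  set NP : ℝ → Λ → Λ → ℝ≥0∞ := fun t A B => ENNReal.ofReal (P t A B) with hNPdef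
  set Nν : Λ → ℝ≥0∞ := fun A => ENNReal.ofReal (ν A) with hNνdef
  set G : ℝ → Λ → ℝ≥0∞ := fun t A => ∑' B, Nν B * NP t B A with hGdef
  have hNν0 : ∀ A, Nν A ≠ 0 := fun A => (ENNReal.ofReal_pos.2 (hνpos A)).ne'
  have hNνt : ∀ A, Nν A ≠ ⊤ := fun A => ENNReal.ofReal_ne_top
  have hPle1 : ∀ t A B, P t A B ≤ 1 := by
    intro t A B
    exact le_trans (Summable.le_tsum (hProw t A).1 B (fun j _ => hPnn t A j)) (hProw t A).2
  have hNPle1 : ∀ t A B, NP t A B ≤ 1 := fun t A B => ENNReal.ofReal_le_one.2 (hPle1 t A B)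
  have hNPt : ∀ t A B, NP t A B ≠ ⊤ := fun t A B => ENNReal.ofReal_ne_top
  have hNP0 : ∀ A B, NP 0 A B = if A = B then 1 else 0 := by
    intro A B; rw [hNPdef]; simp only [hP0 A B]; split <;> simp
  have hNsemi : ∀ s, 0 ≤ s → ∀ t, 0 ≤ t → ∀ A B,
      ∑' C, NP s A C * NP t C B = NP (s+t) A B := by
    intro s hs t ht A B
    have h1 : ∀ C, NP s A C * NP t C B = ENNReal.ofReal (P s A C * P t C B) :=
      fun C => (ENNReal.ofReal_mul (hPnn s A C)).symm
    rw [tsum_congr h1, ← ENNReal.ofReal_tsum_of_nonneg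
      (fun C => mul_nonneg (hPnn s A C) (hPnn t C B)) (hsemi s hs t ht A B).1,
      (hsemi s hs t ht A B).2]
  have hNsum : ∑' B, Nν B = ENNReal.ofReal (∑' B, ν B) :=
    (ENNReal.ofReal_tsum_of_nonneg (fun B => (hνpos B).le) hν).symm
  have hNsum_t : ∑' B, Nν B ≠ ⊤ := by rw [hNsum]; exact ENNReal.ofReal_ne_top
  have hNsum_0 : ∑' B, Nν B ≠ 0 := by
    intro h
    exact hNν0 b₀ (le_antisymm (h ▸ ENNReal.le_tsum b₀) zero_le)
  have hGfin : ∀ t A, G t A ≠ ⊤ := by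
    intro t A
    have : G t A ≤ ∑' B, Nν B := by
      rw [hGdef]
      calc (∑' B, Nν B * NP t B A) ≤ ∑' B, Nν B * 1 := by
            gcongr with B; exact hNPle1 t B A
        _ = ∑' B, Nν B := by simp
    exact lt_top_iff_ne_top.1 (lt_of_le_of_lt this (lt_top_iff_ne_top.2 hNsum_t))
  have hGψ : ∀ A, G ψ A = ENNReal.ofReal (Real.exp (-(α*ψ))) * Nν A := by
    intro A
    have h1 : ∀ B, Nν B * NP ψ B A = ENNReal.ofReal (ν B * P ψ B A) :=
      fun B => (ENNReal.ofReal_mul (hνpos B).le).symm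
    rw [hGdef]
    simp only []
    rw [tsum_congr h1, ← ENNReal.ofReal_tsum_of_nonneg
      (fun B => mul_nonneg (hνpos B).le (hPnn ψ B A)) (hleft A).1,
      (hleft A).2, ENNReal.ofReal_mul (Real.exp_pos _).le]
  have hG0 : ∀ A, G 0 A = Nν A := by
    intro A
    rw [hGdef]
    simp only []
    rw [show (fun B => Nν B * NP 0 B A) = fun B => if B = A then Nν A else 0 by
      funext B
      rw [hNP0 B A]
      by_cases hBA : B = A
      · simp [hBA]
      · simp [hBA]]
    exact tsum_ite_eq A (fun _ => Nν A)
  have hGcha : ∀ s, 0 ≤ s → ∀ t, 0 ≤ t → ∀ A,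
      G (s+t) A = ∑' C, G s C * NP t C A := by
    intro s hs t ht A
    calc G (s+t) A = ∑' B, Nν B * NP (s+t) B A := rfl
      _ = ∑' B, Nν B * ∑' C, NP s B C * NP t C A := by
          exact tsum_congr fun B => by rw [hNsemi s hs t ht B A]
      _ = ∑' (B) (C), Nν B * (NP s B C * NP t C A) := by
          exact tsum_congr fun B => ENNReal.tsum_mul_left.symm
      _ = ∑' (C) (B), Nν B * (NP s B C * NP t C A) := ENNReal.tsum_comm
      _ = ∑' C, G s C * NP t C A := by
          refine tsum_congr fun C => ?_
          rw [show (fun B => Nν B * (NP s B C * NP t C A))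
              = fun B => (Nν B * NP s B C) * NP t C A by funext B; ring,
            ENNReal.tsum_mul_right]
  have hGeig : ∀ t, 0 ≤ t → ∀ A,
      ∑' C, G t C * NP ψ C A = ENNReal.ofReal (Real.exp (-(α*ψ))) * G t A := by
    intro t ht A
    calc (∑' C, G t C * NP ψ C A) = G (t+ψ) A := (hGcha t ht ψ hψ.le A).symm
      _ = G (ψ+t) A := by rw [add_comm]
      _ = ∑' C, G ψ C * NP t C A := hGcha ψ hψ.le t ht A
      _ = ∑' C, ENNReal.ofReal (Real.exp (-(α*ψ))) * (Nν C * NP t C A) := by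
          exact tsum_congr fun C => by rw [hGψ C]; ring
      _ = ENNReal.ofReal (Real.exp (-(α*ψ))) * G t A := ENNReal.tsum_mul_left
  have hGsum : ∀ t, 0 ≤ t → ∑' A, G t A ≤ ∑' B, Nν B := by
    intro t _
    calc (∑' A, G t A) = ∑' (A) (B), Nν B * NP t B A := rfl
      _ = ∑' (B) (A), Nν B * NP t B A := ENNReal.tsum_comm
      _ = ∑' B, Nν B * ∑' A, NP t B A := tsum_congr fun B => ENNReal.tsum_mul_left
      _ ≤ ∑' B, Nν B * 1 := by
          gcongr with B
          rw [← ENNReal.ofReal_tsum_of_nonneg (fun A => hPnn t B A) (hProw t B).1]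
          exact ENNReal.ofReal_le_one.2 (hProw t B).2
      _ = ∑' B, Nν B := by simp
  have hGpos : ∀ t, 0 < t → ∀ A, 0 < G t A := by
    intro t ht A
    refine lt_of_lt_of_le ?_ (ENNReal.le_tsum A)
    exact ENNReal.mul_pos (hNν0 A) (ENNReal.ofReal_pos.2 (hPpos t ht A A)).ne'
  -- the reversed chain
  set Q : Λ → Λ → ℝ≥0∞ :=
    fun B A => (ENNReal.ofReal (Real.exp (α*ψ)) * Nν A * NP ψ A B) / Nν B with hQdef
  have hexp_cancel : ENNReal.ofReal (Real.exp (α*ψ)) * ENNReal.ofReal (Real.exp (-(α*ψ))) = 1 := by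
    rw [← ENNReal.ofReal_mul (Real.exp_pos _).le, ← Real.exp_add]
    norm_num
  have hQpos : ∀ B A, 0 < Q B A := by
    intro B A
    refine ENNReal.div_pos ?_ (hNνt B)
    refine (ENNReal.mul_pos (ENNReal.mul_pos ?_ (hNν0 A)).ne' ?_).ne'
    · exact (ENNReal.ofReal_pos.2 (Real.exp_pos _)).ne'
    · exact (ENNReal.ofReal_pos.2 (hPpos ψ hψ A B)).ne'
  have hQrow : ∀ B, ∑' A, Q B A = 1 := by
    intro B
    have h1 : ∀ A, Q B A
        = (ENNReal.ofReal (Real.exp (α*ψ)) * (Nν B)⁻¹) * (Nν A * NP ψ A B) := by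
      intro A; rw [hQdef]; simp only [div_eq_mul_inv]; ring
    rw [tsum_congr h1, ENNReal.tsum_mul_left]
    show ENNReal.ofReal (Real.exp (α*ψ)) * (Nν B)⁻¹ * G ψ B = 1
    rw [hGψ B]
    calc ENNReal.ofReal (Real.exp (α*ψ)) * (Nν B)⁻¹
          * (ENNReal.ofReal (Real.exp (-(α*ψ))) * Nν B)
        = (ENNReal.ofReal (Real.exp (α*ψ)) * ENNReal.ofReal (Real.exp (-(α*ψ))))
          * ((Nν B)⁻¹ * Nν B) := by ring
      _ = 1 := by rw [hexp_cancel, ENNReal.inv_mul_cancel (hNν0 B) (hNνt B), mul_one]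
  have hQpow : ∀ n B A, SkeletonAux.Qpow Q n B A
      = (ENNReal.ofReal (Real.exp (α*ψ*n)) * Nν A * NP ((n:ℝ)*ψ) A B) / Nν B := by
    intro n
    induction n with
    | zero =>
      intro B A
      rw [SkeletonAux.Qpow_zero]
      have h0 : ((0:ℕ):ℝ)*ψ = 0 := by norm_num
      rw [h0, hNP0 A B]
      simp only [Nat.cast_zero, mul_zero, Real.exp_zero, ENNReal.ofReal_one, one_mul]
      by_cases hAB : A = B
      · rw [if_pos hAB, if_pos hAB.symm, mul_one, hAB, ENNReal.div_self (hNν0 B) (hNνt B)]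
      · rw [if_neg hAB, if_neg (fun h => hAB h.symm), mul_zero, ENNReal.zero_div]
    | succ n ih =>
      intro B A
      rw [SkeletonAux.Qpow_succ]
      have hterm : ∀ C, Q B C * SkeletonAux.Qpow Q n C A
          = (ENNReal.ofReal (Real.exp (α*ψ)) * ENNReal.ofReal (Real.exp (α*ψ*n))
              * Nν A * (Nν B)⁻¹) * (NP ((n:ℝ)*ψ) A C * NP ψ C B) := by
        intro C
        rw [ih C, hQdef]
        simp only [div_eq_mul_inv]
        rw [show ENNReal.ofReal (Real.exp (α*ψ)) * Nν C * NP ψ C B * (Nν B)⁻¹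
            * (ENNReal.ofReal (Real.exp (α*ψ*n)) * Nν A * NP ((n:ℝ)*ψ) A C * (Nν C)⁻¹)
            = (Nν C * (Nν C)⁻¹) * ((ENNReal.ofReal (Real.exp (α*ψ))
              * ENNReal.ofReal (Real.exp (α*ψ*n)) * Nν A * (Nν B)⁻¹)
              * (NP ((n:ℝ)*ψ) A C * NP ψ C B)) from by ring,
          ENNReal.mul_inv_cancel (hNν0 C) (hNνt C), one_mul]
      rw [tsum_congr hterm, ENNReal.tsum_mul_left,
        hNsemi ((n:ℝ)*ψ) (by positivity) ψ hψ.le A B]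
      have hcast : (n:ℝ)*ψ + ψ = ((n+1:ℕ):ℝ)*ψ := by push_cast; ring
      have hexp2 : ENNReal.ofReal (Real.exp (α*ψ)) * ENNReal.ofReal (Real.exp (α*ψ*n))
          = ENNReal.ofReal (Real.exp (α*ψ*((n+1:ℕ):ℝ))) := by
        rw [← ENNReal.ofReal_mul (Real.exp_pos _).le, ← Real.exp_add]
        congr 1
        push_cast
        ring
      rw [hcast, div_eq_mul_inv]
      rw [show ENNReal.ofReal (Real.exp (α*ψ)) * ENNReal.ofReal (Real.exp (α*ψ*n))
          * Nν A * (Nν B)⁻¹ * NP (((n+1:ℕ):ℝ)*ψ) A B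
          = ENNReal.ofReal (Real.exp (α*ψ)) * ENNReal.ofReal (Real.exp (α*ψ*n))
          * Nν A * NP (((n+1:ℕ):ℝ)*ψ) A B * (Nν B)⁻¹ from by ring, hexp2]
  have hQdiv : ∀ b, ∑' n, SkeletonAux.Qpow Q n b b = ∞ := by
    intro b
    set v : ℕ → ℝ := fun n => Real.exp (α * ψ * n) * P ((n:ℝ) * ψ) b b with hvdef
    have hvnn : ∀ n, 0 ≤ v n := fun n => mul_nonneg (Real.exp_pos _).le (hPnn _ b b)
    have hQv : ∀ n, SkeletonAux.Qpow Q n b b = ENNReal.ofReal (v n) := by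
      intro n
      rw [hQpow n b b, div_eq_mul_inv,
        show ENNReal.ofReal (Real.exp (α*ψ*n)) * Nν b * NP ((n:ℝ)*ψ) b b * (Nν b)⁻¹
          = (Nν b * (Nν b)⁻¹) * (ENNReal.ofReal (Real.exp (α*ψ*n)) * NP ((n:ℝ)*ψ) b b)
          from by ring,
        ENNReal.mul_inv_cancel (hNν0 b) (hNνt b), one_mul,
        ← ENNReal.ofReal_mul (Real.exp_pos _).le]
    set L := Filter.limsup (fun n : ℕ => Real.exp (α * ψ * n) * P ((n:ℕ) * ψ) b b)
      Filter.atTop with hLdef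
    have hL : 0 < L := hRpos b
    have hcob : Filter.IsCoboundedUnder (· ≤ ·) Filter.atTop
        (fun n : ℕ => Real.exp (α * ψ * n) * P ((n:ℕ) * ψ) b b) := by
      refine ⟨0, fun a ha => ?_⟩
      obtain ⟨n, hn⟩ := (Filter.eventually_map.1 ha).exists
      exact le_trans (hvnn n) hn
    have hfreq : ∃ᶠ n in Filter.atTop, L/2 < v n := by
      have := Filter.frequently_lt_of_lt_limsup hcob (by linarith : L/2 < L)
      exact this
    by_contra hne
    have htend : Filter.Tendsto (fun n => SkeletonAux.Qpow Q n b b) Filter.atTop (nhds 0) :=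
      ENNReal.tendsto_atTop_zero_of_tsum_ne_top hne
    have hev : ∀ᶠ n in Filter.atTop, SkeletonAux.Qpow Q n b b < ENNReal.ofReal (L/2) :=
      htend.eventually_lt_const (ENNReal.ofReal_pos.2 (by linarith))
    obtain ⟨n, hn1, hn2⟩ := (hfreq.and_eventually hev).exists
    rw [hQv n] at hn2
    exact absurd (ENNReal.ofReal_le_ofReal hn1.le) (not_le.2 hn2)
  -- eigenvector identification for each t ≥ 0
  have hGconst : ∀ t, 0 ≤ t → ∀ A, G t A = (G t b₀ / Nν b₀) * Nν A := by
    intro t ht A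
    set H : Λ → ℝ≥0∞ := fun A => G t A / Nν A with hHdef
    have hH : ∀ B, ∑' A, Q B A * H A = H B := by
      intro B
      have hterm : ∀ A, Q B A * H A
          = (ENNReal.ofReal (Real.exp (α*ψ)) * (Nν B)⁻¹) * (G t A * NP ψ A B) := by
        intro A
        rw [hQdef, hHdef]
        simp only [div_eq_mul_inv]
        rw [show ENNReal.ofReal (Real.exp (α*ψ)) * Nν A * NP ψ A B * (Nν B)⁻¹
            * (G t A * (Nν A)⁻¹)
            = (Nν A * (Nν A)⁻¹) * ((ENNReal.ofReal (Real.exp (α*ψ)) * (Nν B)⁻¹)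
              * (G t A * NP ψ A B)) from by ring,
          ENNReal.mul_inv_cancel (hNν0 A) (hNνt A), one_mul]
      rw [tsum_congr hterm, ENNReal.tsum_mul_left, hGeig t ht B, hHdef]
      simp only [div_eq_mul_inv]
      rw [show ENNReal.ofReal (Real.exp (α*ψ)) * (Nν B)⁻¹
          * (ENNReal.ofReal (Real.exp (-(α*ψ))) * G t B)
          = (ENNReal.ofReal (Real.exp (α*ψ)) * ENNReal.ofReal (Real.exp (-(α*ψ))))
            * (G t B * (Nν B)⁻¹) from by ring, hexp_cancel, one_mul]
    have hconst := SkeletonAux.harmonic_const Q hQpos hQrow hQdiv H hH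
    have h1 : H A = H b₀ := hconst A b₀
    have h2 : G t A = H A * Nν A := by
      rw [hHdef]
      simp only [div_eq_mul_inv]
      rw [mul_assoc, ENNReal.inv_mul_cancel (hNν0 A) (hNνt A), mul_one]
    rw [h2, h1]
  set c : ℝ → ℝ≥0∞ := fun t => G t b₀ / Nν b₀ with hcdef
  have hcfin : ∀ t, c t ≠ ⊤ := by
    intro t
    exact lt_top_iff_ne_top.1 (ENNReal.div_lt_top (hGfin t b₀) (hNν0 b₀))
  have hc0 : c 0 = 1 := by
    rw [hcdef]
    simp only []
    rw [hG0 b₀, ENNReal.div_self (hNν0 b₀) (hNνt b₀)]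
  have hcψ : c ψ = ENNReal.ofReal (Real.exp (-(α*ψ))) := by
    rw [hcdef]
    simp only []
    rw [hGψ b₀, div_eq_mul_inv, mul_assoc, ENNReal.mul_inv_cancel (hNν0 b₀) (hNνt b₀),
      mul_one]
  have hcmul : ∀ s, 0 ≤ s → ∀ t, 0 ≤ t → c (s+t) = c s * c t := by
    intro s hs t ht
    have h1 : G (s+t) b₀ = c (s+t) * Nν b₀ := hGconst (s+t) (by linarith) b₀
    have h2 : G (s+t) b₀ = (c s * c t) * Nν b₀ := by
      rw [hGcha s hs t ht b₀]
      have hterm : ∀ C, G s C * NP t C b₀ = c s * (Nν C * NP t C b₀) := by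
        intro C
        rw [hGconst s hs C]
        ring
      rw [tsum_congr hterm, ENNReal.tsum_mul_left]
      show c s * G t b₀ = c s * c t * Nν b₀
      rw [hGconst t ht b₀]
      ring
    have := h1.symm.trans h2
    exact (ENNReal.mul_left_inj (hNν0 b₀) (hNνt b₀)).1 this
  have hcne0 : ∀ t, 0 ≤ t → c t ≠ 0 := by
    intro t ht
    rcases eq_or_lt_of_le ht with h0 | hpos'
    · rw [← h0, hc0]; exact one_ne_zero
    · intro hc
      have h1 : G t b₀ = c t * Nν b₀ := hGconst t ht b₀
      rw [hc, zero_mul] at h1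
      exact absurd h1 (hGpos t hpos' b₀).ne'
  have hcle1 : ∀ t, 0 ≤ t → c t ≤ 1 := by
    intro t ht
    have h1 : (∑' A, G t A) = c t * ∑' B, Nν B := by
      rw [tsum_congr (fun A => hGconst t ht A), ENNReal.tsum_mul_left]
    have h2 : c t * (∑' B, Nν B) ≤ 1 * ∑' B, Nν B := by
      rw [← h1, one_mul]
      exact hGsum t ht
    exact (ENNReal.mul_le_mul_iff_left hNsum_0 hNsum_t).1 h2
  set γ : ℝ → ℝ := fun t => (c t).toReal with hγdef
  have hγpos : ∀ t, 0 ≤ t → 0 < γ t :=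
    fun t ht => ENNReal.toReal_pos (hcne0 t ht) (hcfin t)
  have hγle1 : ∀ t, 0 ≤ t → γ t ≤ 1 := by
    intro t ht
    have := ENNReal.toReal_mono (by norm_num : (1:ℝ≥0∞) ≠ ⊤) (hcle1 t ht)
    simpa using this
  have hγmul : ∀ s, 0 ≤ s → ∀ t, 0 ≤ t → γ (s+t) = γ s * γ t := by
    intro s hs t ht
    rw [hγdef]
    simp only []
    rw [hcmul s hs t ht, ENNReal.toReal_mul]
  have hγψ : γ ψ = Real.exp (-(α*ψ)) := by
    rw [hγdef]
    simp only []
    rw [hcψ, ENNReal.toReal_ofReal (Real.exp_pos _).le]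
  have hγ0 : γ 0 = 1 := by
    rw [hγdef]
    simp only []
    rw [hc0, ENNReal.toReal_one]
  have hγpow : ∀ (m : ℕ) (x : ℝ), 0 ≤ x → γ ((m:ℝ)*x) = γ x ^ m := by
    intro m
    induction m with
    | zero => intro x hx; simpa using hγ0
    | succ m ih =>
      intro x hx
      have hcast : ((m+1:ℕ):ℝ)*x = x + (m:ℝ)*x := by push_cast; ring
      rw [hcast, hγmul x hx ((m:ℝ)*x) (by positivity), ih x hx, pow_succ]
      ring
  have hγrat : ∀ q : ℚ, 0 ≤ q → γ ((q:ℝ)*ψ) = Real.exp (-(α*ψ)*(q:ℝ)) := by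
    intro q hq
    have hden : (q.den:ℝ) ≠ 0 := Nat.cast_ne_zero.2 q.den_nz
    have hnum : ((q.num.toNat:ℕ):ℝ) = (q.num:ℝ) := by
      exact_mod_cast congrArg (Int.cast : ℤ → ℝ) (Int.toNat_of_nonneg (Rat.num_nonneg.2 hq))
    have hqr : (q:ℝ) * (q.den:ℝ) = (q.num:ℝ) := by
      rw [Rat.cast_def]
      field_simp
    have hkey : γ ((q:ℝ)*ψ) ^ q.den = Real.exp (-(α*ψ)*(q:ℝ)) ^ q.den := by
      have h1 : γ ((q.den:ℝ) * ((q:ℝ)*ψ)) = γ ((q:ℝ)*ψ) ^ q.den :=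
        hγpow q.den ((q:ℝ)*ψ) (by positivity)
      have h2 : (q.den:ℝ) * ((q:ℝ)*ψ) = ((q.num.toNat:ℕ):ℝ) * ψ := by
        rw [hnum, ← hqr]; ring
      have h3 : γ (((q.num.toNat:ℕ):ℝ) * ψ) = γ ψ ^ q.num.toNat :=
        hγpow q.num.toNat ψ hψ.le
      rw [← h1, h2, h3, hγψ, ← Real.exp_nat_mul, ← Real.exp_nat_mul]
      congr 1
      rw [hnum, ← hqr]
      ring
    have hinj := pow_left_strictMonoOn₀ (M₀ := ℝ) (n := q.den) q.den_nz
    have := hinj.injOn (Set.mem_setOf.2 (hγpos ((q:ℝ)*ψ) (by positivity)).le)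
      (Set.mem_setOf.2 (Real.exp_pos _).le) hkey
    exact this
  have hγexp : ∀ t, 0 ≤ t → γ t = Real.exp (-(α*t)) := by
    intro t ht
    have hub : ∀ q : ℚ, 0 ≤ (q:ℝ) → (q:ℝ)*ψ ≤ t → γ t ≤ Real.exp (-(α*ψ)*(q:ℝ)) := by
      intro q hq hqt
      have h1 : γ ((q:ℝ)*ψ + (t - (q:ℝ)*ψ)) = γ ((q:ℝ)*ψ) * γ (t - (q:ℝ)*ψ) :=
        hγmul ((q:ℝ)*ψ) (by positivity) (t - (q:ℝ)*ψ) (by linarith)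
      rw [show (q:ℝ)*ψ + (t - (q:ℝ)*ψ) = t from by ring] at h1
      calc γ t = γ ((q:ℝ)*ψ) * γ (t - (q:ℝ)*ψ) := h1
        _ ≤ γ ((q:ℝ)*ψ) * 1 := by
            have := hγpos ((q:ℝ)*ψ) (by positivity)
            have := hγle1 (t - (q:ℝ)*ψ) (by linarith)
            nlinarith [hγpos (t - (q:ℝ)*ψ) (by linarith : (0:ℝ) ≤ t - (q:ℝ)*ψ)]
        _ = Real.exp (-(α*ψ)*(q:ℝ)) := by rw [mul_one, hγrat q (by exact_mod_cast hq)]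
    have hlb : ∀ q : ℚ, t ≤ (q:ℝ)*ψ → Real.exp (-(α*ψ)*(q:ℝ)) ≤ γ t := by
      intro q hqt
      have hq : 0 ≤ (q:ℝ) := by nlinarith
      have h1 : γ (t + ((q:ℝ)*ψ - t)) = γ t * γ ((q:ℝ)*ψ - t) :=
        hγmul t ht ((q:ℝ)*ψ - t) (by linarith)
      rw [show t + ((q:ℝ)*ψ - t) = (q:ℝ)*ψ from by ring] at h1
      calc Real.exp (-(α*ψ)*(q:ℝ)) = γ ((q:ℝ)*ψ) := (hγrat q (by exact_mod_cast hq)).symm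
        _ = γ t * γ ((q:ℝ)*ψ - t) := h1
        _ ≤ γ t * 1 := by
            have := hγpos t ht
            have := hγle1 ((q:ℝ)*ψ - t) (by linarith)
            nlinarith [hγpos ((q:ℝ)*ψ - t) (by linarith : (0:ℝ) ≤ (q:ℝ)*ψ - t)]
        _ = γ t := mul_one _
    have htψ : 0 ≤ t/ψ := div_nonneg ht hψ.le
    -- upper bound
    have hup : γ t ≤ Real.exp (-(α*t)) := by
      have hex : ∀ n : ℕ, ∃ q : ℚ, t/ψ - 1/(n+1) < (q:ℝ) ∧ (q:ℝ) < t/ψ + 1/(n+1) ∧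
          0 ≤ (q:ℝ) ∧ (q:ℝ)*ψ ≤ t := by
        intro n
        obtain ⟨q, hq1, hq2⟩ := exists_rat_btwn
          (show t/ψ - 1/((n:ℝ)+1) < t/ψ from by
            have : (0:ℝ) < 1/((n:ℝ)+1) := by positivity
            linarith)
        refine ⟨max q 0, ?_, ?_, ?_, ?_⟩
        · push_cast
          exact lt_of_lt_of_le hq1 (le_max_left _ _)
        · push_cast
          rw [max_def]
          split
          · have : (0:ℝ) < 1/((n:ℝ)+1) := by positivity
            linarith
          · have : (0:ℝ) < 1/((n:ℝ)+1) := by positivity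
            linarith
        · push_cast
          exact le_max_right _ _
        · push_cast
          rw [← le_div_iff₀ hψ]
          rw [max_def]
          split
          · exact htψ
          · exact hq2.le
      choose qs hq1 hq2 hq3 hq4 using hex
      have htendq : Filter.Tendsto (fun n : ℕ => ((qs n : ℝ))) Filter.atTop (nhds (t/ψ)) := by
        have hlow : Filter.Tendsto (fun n : ℕ => t/ψ - 1/((n:ℝ)+1)) Filter.atTop
            (nhds (t/ψ - 0)) :=
          (tendsto_const_nhds).sub tendsto_one_div_add_atTop_nhds_zero_nat
        have hhigh : Filter.Tendsto (fun n : ℕ => t/ψ + 1/((n:ℝ)+1)) Filter.atTop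
            (nhds (t/ψ + 0)) :=
          (tendsto_const_nhds).add tendsto_one_div_add_atTop_nhds_zero_nat
        rw [sub_zero] at hlow
        rw [add_zero] at hhigh
        exact tendsto_of_tendsto_of_tendsto_of_le_of_le hlow hhigh
          (fun n => (hq1 n).le) (fun n => (hq2 n).le)
      have htende : Filter.Tendsto (fun n : ℕ => Real.exp (-(α*ψ)*(qs n : ℝ)))
          Filter.atTop (nhds (Real.exp (-(α*t)))) := by
        have h1 : Filter.Tendsto (fun n : ℕ => -(α*ψ)*(qs n : ℝ)) Filter.atTop
            (nhds (-(α*ψ)*(t/ψ))) := htendq.const_mul _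
        rw [show -(α*ψ)*(t/ψ) = -(α*t) from by field_simp] at h1
        exact (Real.continuous_exp.tendsto _).comp h1
      exact ge_of_tendsto' htende (fun n => hub (qs n) (hq3 n) (hq4 n))
    -- lower bound
    have hlo : Real.exp (-(α*t)) ≤ γ t := by
      have hex : ∀ n : ℕ, ∃ q : ℚ, t/ψ < (q:ℝ) ∧ (q:ℝ) < t/ψ + 1/(n+1) := by
        intro n
        exact exists_rat_btwn (show t/ψ < t/ψ + 1/((n:ℝ)+1) from by
          have : (0:ℝ) < 1/((n:ℝ)+1) := by positivity
          linarith)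
      choose qs hq1 hq2 using hex
      have htendq : Filter.Tendsto (fun n : ℕ => ((qs n : ℝ))) Filter.atTop (nhds (t/ψ)) := by
        have hhigh : Filter.Tendsto (fun n : ℕ => t/ψ + 1/((n:ℝ)+1)) Filter.atTop
            (nhds (t/ψ + 0)) :=
          (tendsto_const_nhds).add tendsto_one_div_add_atTop_nhds_zero_nat
        rw [add_zero] at hhigh
        exact tendsto_of_tendsto_of_tendsto_of_le_of_le tendsto_const_nhds hhigh
          (fun n => (hq1 n).le) (fun n => (hq2 n).le)
      have htende : Filter.Tendsto (fun n : ℕ => Real.exp (-(α*ψ)*(qs n : ℝ)))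
          Filter.atTop (nhds (Real.exp (-(α*t)))) := by
        have h1 : Filter.Tendsto (fun n : ℕ => -(α*ψ)*(qs n : ℝ)) Filter.atTop
            (nhds (-(α*ψ)*(t/ψ))) := htendq.const_mul _
        rw [show -(α*ψ)*(t/ψ) = -(α*t) from by field_simp] at h1
        exact (Real.continuous_exp.tendsto _).comp h1
      refine le_of_tendsto' htende (fun n => hlb (qs n) ?_)
      rw [← div_le_iff₀ hψ]
      exact (hq1 n).le
    linarith
  have hcval : ∀ t, 0 ≤ t → c t = ENNReal.ofReal (Real.exp (-(α*t))) := by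
    intro t ht
    have h1 := ENNReal.ofReal_toReal (hcfin t)
    rw [show (c t).toReal = γ t from rfl, hγexp t ht] at h1
    exact h1.symm
  -- part 1
  have part1 : ∀ t ≥ 0, ∀ A', (Summable fun B => ν B * P t B A') ∧
      ∑' B, ν B * P t B A' = Real.exp (-(α * t)) * ν A' := by
    intro t ht A'
    have hnn : ∀ B, 0 ≤ ν B * P t B A' := fun B => mul_nonneg (hνpos B).le (hPnn t B A')
    have hsum : Summable fun B => ν B * P t B A' := by
      refine Summable.of_nonneg_of_le hnn (fun B => ?_) hν
      calc ν B * P t B A' ≤ ν B * 1 := by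
            have := hPle1 t B A'
            nlinarith [hνpos B]
        _ = ν B := mul_one _
    refine ⟨hsum, ?_⟩
    have h1 : ENNReal.ofReal (∑' B, ν B * P t B A') = G t A' := by
      rw [ENNReal.ofReal_tsum_of_nonneg hnn hsum]
      exact tsum_congr fun B => ENNReal.ofReal_mul (hνpos B).le
    have h2 : G t A' = c t * Nν A' := hGconst t ht A'
    rw [hcval t ht, ← ENNReal.ofReal_mul (Real.exp_pos _).le] at h2
    have h3 := h1.trans h2
    exact (ENNReal.ofReal_eq_ofReal_iff (tsum_nonneg hnn)
      (mul_nonneg (Real.exp_pos _).le (hνpos A').le)).1 h3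
  refine ⟨part1, ?_⟩
  -- part 2
  intro A
  have hb : ∀ t, 0 ≤ t → Real.exp (α*t) * P t A A ≤ 1 := by
    intro t ht
    obtain ⟨hsum, hval⟩ := part1 t ht A
    have h1 : ν A * P t A A ≤ Real.exp (-(α*t)) * ν A := by
      rw [← hval]
      exact Summable.le_tsum hsum A (fun j _ => mul_nonneg (hνpos j).le (hPnn t j A))
    have h2 : P t A A ≤ Real.exp (-(α*t)) := by
      nlinarith [hνpos A]
    calc Real.exp (α*t) * P t A A ≤ Real.exp (α*t) * Real.exp (-(α*t)) := by
          nlinarith [Real.exp_pos (α*t)]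
      _ = 1 := by rw [← Real.exp_add]; norm_num
  have hineq : Filter.limsup (fun n : ℕ => Real.exp (α * ψ * n) * P (n * ψ) A A)
      Filter.atTop ≤ Filter.limsup (fun t : ℝ => Real.exp (α * t) * P t A A)
      Filter.atTop := by
    rw [Filter.limsup_eq, Filter.limsup_eq]
    refine csInf_le_csInf ?_ ?_ ?_
    · refine ⟨0, fun a ha => ?_⟩
      obtain ⟨n, hn⟩ := ha.exists
      exact le_trans (mul_nonneg (Real.exp_pos _).le (hPnn _ A A)) hn
    · refine ⟨1, ?_⟩
      exact (Filter.eventually_ge_atTop 0).mono fun t ht => hb t ht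
    · intro a ha
      have htend : Filter.Tendsto (fun n : ℕ => (n:ℝ)*ψ) Filter.atTop Filter.atTop :=
        tendsto_natCast_atTop_atTop.atTop_mul_const hψ
      have := htend.eventually ha
      refine this.mono fun n hn => ?_
      rw [show α * ψ * (n:ℝ) = α * ((n:ℝ)*ψ) from by ring]
      exact hn
  exact lt_of_lt_of_le (hRpos A) hineq
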